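/- For a finitely generated group G, the natural surjections gr_q(G) → gr_q(G/G'') on lower central series quotients are isomorphisms for q ≤ 3; consequently θ_q(G) ≤ φ_q(G) with equality for q ≤ 3. -/

import Mathlib

open scoped TensorProduct

set_option maxHeartbeats 1000000
set_option synthInstance.maxHeartbeats 400000

noncomputable section

namespace ChenRanks

/-- The rank of a (finitely generated) group: the `ℚ`-dimension of its abelianization
tensored with `ℚ`. -/
def grpRank (G : Type*) [Group G] : ℕ :=
  Module.finrank ℚ (ℚ ⊗[ℤ] (Additive (Abelianization G)))

/-- The graded quotient `gr_q(G) = Γ_q(G)/Γ_{q+1}(G)` of the lower central series,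
with the classical indexing `Γ₁(G) = G` (Mathlib's `lowerCentralSeries G 0 = ⊤`). -/
abbrev grQuot (G : Type*) [Group G] (q : ℕ) : Type _ :=
  ↥(Subgroup.lowerCentralSeries (⊤ : Subgroup G) (q - 1)) ⧸
    ((Subgroup.lowerCentralSeries (⊤ : Subgroup G) q).subgroupOf (Subgroup.lowerCentralSeries (⊤ : Subgroup G) (q - 1)))

/-- The lower central series rank `φ_q(G) = rk Γ_q(G)/Γ_{q+1}(G)`. -/
def lcsRank (G : Type*) [Group G] (q : ℕ) : ℕ := grpRank (grQuot G q)

/-- The second derived subgroup `G'' = [[G,G],[G,G]]`. -/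
def doubleCommutator (G : Type*) [Group G] : Subgroup G :=
  ⁅(⁅(⊤ : Subgroup G), (⊤ : Subgroup G)⁆), (⁅(⊤ : Subgroup G), (⊤ : Subgroup G)⁆)⁆

instance (G : Type*) [Group G] : (doubleCommutator G).Normal := by
  unfold doubleCommutator; infer_instance

/-- The metabelian quotient `G/G''`. -/
abbrev Metab (G : Type*) [Group G] : Type _ := G ⧸ doubleCommutator G

/-- The Chen ranks `θ_q(G) = φ_q(G/G'')`. -/
def chenRank (G : Type*) [Group G] (q : ℕ) : ℕ := lcsRank (Metab G) q

/-- The natural homomorphism `gr_q(G) → gr_q(H)` induced by a group homomorphism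
`f : G → H`. -/
def grMap {G H : Type*} [Group G] [Group H] (f : G →* H) (q : ℕ) :
    grQuot G q →* grQuot H q :=
  QuotientGroup.lift _
    ((QuotientGroup.mk' ((Subgroup.lowerCentralSeries (⊤ : Subgroup H) q).subgroupOf
        (Subgroup.lowerCentralSeries (⊤ : Subgroup H) (q - 1)))).comp
      ((f.domRestrict (Subgroup.lowerCentralSeries (⊤ : Subgroup G) (q - 1))).codRestrict
        (Subgroup.lowerCentralSeries (⊤ : Subgroup H) (q - 1))
        (fun x => lowerCentralSeries.map f (q - 1) (Subgroup.mem_map.2 ⟨x.1, x.2, rfl⟩))))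
    (by
      intro x hx
      rw [MonoidHom.mem_ker, MonoidHom.comp_apply, ← MonoidHom.mem_ker,
        QuotientGroup.ker_mk']
      rw [Subgroup.mem_subgroupOf] at hx ⊢
      exact lowerCentralSeries.map f q (Subgroup.mem_map.2 ⟨x.1, hx, rfl⟩))

section Aux

open scoped commutatorElement

variable {G : Type*} [Group G] {H : Type*} [Group H]

lemma lcs_succ_eq (G : Type*) [Group G] (n : ℕ) :
    Subgroup.lowerCentralSeries (⊤ : Subgroup G) (n + 1) = ⁅Subgroup.lowerCentralSeries (⊤ : Subgroup G) n, (⊤ : Subgroup G)⁆ := rfl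

lemma lcs_map_eq (f : G →* H) (hf : Function.Surjective f) (n : ℕ) :
    Subgroup.map f (Subgroup.lowerCentralSeries (⊤ : Subgroup G) n) = Subgroup.lowerCentralSeries (⊤ : Subgroup H) n := by
  induction n with
  | zero => simpa using Subgroup.map_top_of_surjective f hf
  | succ n ih =>
      rw [lcs_succ_eq, lcs_succ_eq, Subgroup.map_commutator, ih,
        Subgroup.map_top_of_surjective f hf]

lemma lcs_quotient_eq_bot (N : Subgroup G) [N.Normal] (n : ℕ)
    (h : Subgroup.lowerCentralSeries (⊤ : Subgroup G) n ≤ N) :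
    Subgroup.lowerCentralSeries (⊤ : Subgroup (G ⧸ N)) n = ⊥ := by
  rw [← lcs_map_eq (QuotientGroup.mk' N) (QuotientGroup.mk'_surjective N) n,
    Subgroup.map_eq_bot_iff, QuotientGroup.ker_mk']
  exact h

lemma doubleCommutator_le_lcs (G : Type*) [Group G] :
    doubleCommutator G ≤ Subgroup.lowerCentralSeries (⊤ : Subgroup G) 3 := by
  have hπ : Function.Surjective (QuotientGroup.mk' (Subgroup.lowerCentralSeries (⊤ : Subgroup G) 3)) :=
    QuotientGroup.mk'_surjective _
  have h3 : Subgroup.lowerCentralSeries (⊤ : Subgroup (G ⧸ Subgroup.lowerCentralSeries (⊤ : Subgroup G) 3)) 3 = ⊥ :=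
    lcs_quotient_eq_bot _ 3 le_rfl
  have h3' : ⁅⁅(⁅(⊤ : Subgroup (G ⧸ Subgroup.lowerCentralSeries (⊤ : Subgroup G) 3)),
      (⊤ : Subgroup (G ⧸ Subgroup.lowerCentralSeries (⊤ : Subgroup G) 3))⁆ :
        Subgroup (G ⧸ Subgroup.lowerCentralSeries (⊤ : Subgroup G) 3)),
      (⊤ : Subgroup (G ⧸ Subgroup.lowerCentralSeries (⊤ : Subgroup G) 3))⁆,
      (⊤ : Subgroup (G ⧸ Subgroup.lowerCentralSeries (⊤ : Subgroup G) 3))⁆ =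
      (⊥ : Subgroup (G ⧸ Subgroup.lowerCentralSeries (⊤ : Subgroup G) 3)) := h3
  have key : (⁅(⁅(⊤ : Subgroup (G ⧸ Subgroup.lowerCentralSeries (⊤ : Subgroup G) 3)),
      (⊤ : Subgroup (G ⧸ Subgroup.lowerCentralSeries (⊤ : Subgroup G) 3))⁆ :
        Subgroup (G ⧸ Subgroup.lowerCentralSeries (⊤ : Subgroup G) 3)),
      (⁅(⊤ : Subgroup (G ⧸ Subgroup.lowerCentralSeries (⊤ : Subgroup G) 3)),
      (⊤ : Subgroup (G ⧸ Subgroup.lowerCentralSeries (⊤ : Subgroup G) 3))⁆ :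
        Subgroup (G ⧸ Subgroup.lowerCentralSeries (⊤ : Subgroup G) 3))⁆ :
        Subgroup (G ⧸ Subgroup.lowerCentralSeries (⊤ : Subgroup G) 3)) = ⊥ := by
    apply Subgroup.commutator_commutator_eq_bot_of_rotate
    · rw [Subgroup.commutator_comm (⊤ : Subgroup (G ⧸ Subgroup.lowerCentralSeries (⊤ : Subgroup G) 3))
        (⁅(⊤ : Subgroup (G ⧸ Subgroup.lowerCentralSeries (⊤ : Subgroup G) 3)),
          (⊤ : Subgroup (G ⧸ Subgroup.lowerCentralSeries (⊤ : Subgroup G) 3))⁆ :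
            Subgroup (G ⧸ Subgroup.lowerCentralSeries (⊤ : Subgroup G) 3))]
      exact h3'
    · exact h3'
  have hmap : Subgroup.map (QuotientGroup.mk' (Subgroup.lowerCentralSeries (⊤ : Subgroup G) 3))
      (doubleCommutator G) = ⊥ := by
    rw [doubleCommutator, Subgroup.map_commutator, Subgroup.map_commutator,
      Subgroup.map_top_of_surjective _ hπ]
    exact key
  rw [Subgroup.map_eq_bot_iff, QuotientGroup.ker_mk'] at hmap
  exact hmap

/-- For a finitely generated group, each term of the lower central series is generated
by a finite set together with the next term. -/
lemma exists_finite_gen (G : Type*) [Group G] (hG : Group.FG G) (n : ℕ) :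
    ∃ T : Set G, T.Finite ∧ T ⊆ Subgroup.lowerCentralSeries (⊤ : Subgroup G) n ∧
      Subgroup.closure T ⊔ Subgroup.lowerCentralSeries (⊤ : Subgroup G) (n + 1) = Subgroup.lowerCentralSeries (⊤ : Subgroup G) n := by
  obtain ⟨S, hScl, hSfin⟩ := Group.fg_iff.mp hG
  induction n with
  | zero =>
      refine ⟨S, hSfin, fun x _ => Subgroup.mem_top x, ?_⟩
      rw [hScl]
      simp
  | succ n ih =>
      obtain ⟨T, hTfin, hTsub, hTsup⟩ := ih
      set N := Subgroup.lowerCentralSeries (⊤ : Subgroup G) (n + 2) with hNdef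
      let π := QuotientGroup.mk' N
      have hπ : Function.Surjective π := QuotientGroup.mk'_surjective N
      set T' : Set G := Set.image2 (fun t s => ⁅t, s⁆) T S with hT'def
      have hT'fin : T'.Finite := Set.Finite.image2 _ hTfin hSfin
      have hT'sub : T' ⊆ Subgroup.lowerCentralSeries (⊤ : Subgroup G) (n + 1) := by
        rintro _ ⟨t, ht, s, hs, rfl⟩
        exact Subgroup.commutator_mem_commutator (hTsub ht) (Subgroup.mem_top s)
      refine ⟨T', hT'fin, hT'sub, ?_⟩
      have hle1 : Subgroup.closure T' ⊔ Subgroup.lowerCentralSeries (⊤ : Subgroup G) (n + 2) ≤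
          Subgroup.lowerCentralSeries (⊤ : Subgroup G) (n + 1) :=
        sup_le ((Subgroup.closure_le _).mpr hT'sub)
          (lowerCentralSeries_antitone _ (Nat.le_succ _))
      refine le_antisymm hle1 ?_
      -- work in the quotient G ⧸ N
      have hbot : Subgroup.lowerCentralSeries (⊤ : Subgroup (G ⧸ N)) (n + 2) = ⊥ := lcs_quotient_eq_bot N _ le_rfl
      have hcent : ∀ a ∈ Subgroup.lowerCentralSeries (⊤ : Subgroup (G ⧸ N)) (n + 1), ∀ x : G ⧸ N,
          a * x = x * a := by
        intro a ha x
        have : ⁅a, x⁆ ∈ Subgroup.lowerCentralSeries (⊤ : Subgroup (G ⧸ N)) (n + 2) :=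
          Subgroup.commutator_mem_commutator ha (Subgroup.mem_top x)
        rw [hbot, Subgroup.mem_bot] at this
        exact commutatorElement_eq_one_iff_mul_comm.mp this
      set K : Subgroup (G ⧸ N) := Subgroup.closure (π '' T') with hKdef
      have hKle : K ≤ Subgroup.lowerCentralSeries (⊤ : Subgroup (G ⧸ N)) (n + 1) := by
        rw [hKdef, Subgroup.closure_le]
        rintro _ ⟨z, hz, rfl⟩
        have : π z ∈ Subgroup.map π (Subgroup.lowerCentralSeries (⊤ : Subgroup G) (n + 1)) :=
          Subgroup.mem_map.2 ⟨z, hT'sub hz, rfl⟩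
        rwa [lcs_map_eq π hπ] at this
      have hKcent : ∀ k ∈ K, ∀ x : G ⧸ N, k * x = x * k := fun k hk => hcent k (hKle hk)
      -- the set of `a` such that all commutators `⁅a, x⁆` lie in `K` is a subgroup
      let A : Subgroup (G ⧸ N) :=
        { carrier := { a : G ⧸ N | ∀ x : G ⧸ N, ⁅a, x⁆ ∈ K }
          one_mem' := by intro x; simpa using one_mem K
          mul_mem' := by
            intro a b ha hb x
            have hid : ⁅a * b, x⁆ = a * ⁅b, x⁆ * a⁻¹ * ⁅a, x⁆ := by
              simp only [commutatorElement_def]; group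
            have hc : a * ⁅b, x⁆ * a⁻¹ = ⁅b, x⁆ := by
              rw [← hKcent _ (hb x) a]; group
            show ⁅a * b, x⁆ ∈ K
            rw [hid, hc]
            exact mul_mem (hb x) (ha x)
          inv_mem' := by
            intro a ha x
            have hid : ⁅a⁻¹, x⁆ = a⁻¹ * ⁅a, x⁆⁻¹ * a := by
              simp only [commutatorElement_def]; group
            have hc : a⁻¹ * ⁅a, x⁆⁻¹ * a = ⁅a, x⁆⁻¹ := by
              rw [← hKcent _ (inv_mem (ha x)) a⁻¹]; group
            show ⁅a⁻¹, x⁆ ∈ K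
            rw [hid, hc]
            exact inv_mem (ha x) }
      have hTA : ∀ t ∈ T, (π t : G ⧸ N) ∈ A := by
        intro t ht
        have htn : (π t : G ⧸ N) ∈ Subgroup.lowerCentralSeries (⊤ : Subgroup (G ⧸ N)) n := by
          have : π t ∈ Subgroup.map π (Subgroup.lowerCentralSeries (⊤ : Subgroup G) n) :=
            Subgroup.mem_map.2 ⟨t, hTsub ht, rfl⟩
          rwa [lcs_map_eq π hπ] at this
        have hval : ∀ y : G ⧸ N, ⁅(π t : G ⧸ N), y⁆ ∈ Subgroup.lowerCentralSeries (⊤ : Subgroup (G ⧸ N)) (n + 1) :=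
          fun y => Subgroup.commutator_mem_commutator htn (Subgroup.mem_top y)
        -- the set of `x` with `⁅π t, x⁆ ∈ K` is a subgroup containing the generators
        let B : Subgroup (G ⧸ N) :=
          { carrier := { x : G ⧸ N | ⁅(π t : G ⧸ N), x⁆ ∈ K }
            one_mem' := by simpa using one_mem K
            mul_mem' := by
              intro x y hx hy
              have hid : ⁅(π t : G ⧸ N), x * y⁆ = ⁅(π t : G ⧸ N), x⁆ *
                  (x * ⁅(π t : G ⧸ N), y⁆ * x⁻¹) := by
                simp only [commutatorElement_def]; group
              have hc : x * ⁅(π t : G ⧸ N), y⁆ * x⁻¹ = ⁅(π t : G ⧸ N), y⁆ := by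
                rw [← hcent _ (hval y) x]; group
              show ⁅(π t : G ⧸ N), x * y⁆ ∈ K
              rw [hid, hc]
              exact mul_mem hx hy
            inv_mem' := by
              intro x hx
              have hid : ⁅(π t : G ⧸ N), x⁻¹⁆ = x⁻¹ * ⁅(π t : G ⧸ N), x⁆⁻¹ * x := by
                simp only [commutatorElement_def]; group
              have hc : x⁻¹ * ⁅(π t : G ⧸ N), x⁆⁻¹ * x = ⁅(π t : G ⧸ N), x⁆⁻¹ := by
                rw [← hcent _ (inv_mem (hval x)) x⁻¹]; group
              show ⁅(π t : G ⧸ N), x⁻¹⁆ ∈ K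
              rw [hid, hc]
              exact inv_mem hx }
        intro x
        have hxB : x ∈ B := by
          have : (⊤ : Subgroup (G ⧸ N)) ≤ B := by
            have hS' : Subgroup.map π (Subgroup.closure S) = ⊤ := by
              rw [hScl]; exact Subgroup.map_top_of_surjective π hπ
            rw [← hS',
              MonoidHom.map_closure, Subgroup.closure_le]
            rintro _ ⟨s, hs, rfl⟩
            show ⁅(π t : G ⧸ N), π s⁆ ∈ K
            rw [← map_commutatorElement]
            exact Subgroup.subset_closure ⟨⁅t, s⁆, ⟨t, ht, s, hs, rfl⟩, rfl⟩
          exact this (Subgroup.mem_top x)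
        exact hxB
      have hA : Subgroup.lowerCentralSeries (⊤ : Subgroup (G ⧸ N)) n ≤ A := by
        rw [← lcs_map_eq π hπ n, ← hTsup, Subgroup.map_sup, MonoidHom.map_closure]
        refine sup_le ((Subgroup.closure_le _).mpr ?_) ?_
        · rintro _ ⟨t, ht, rfl⟩; exact hTA t ht
        · rw [lcs_map_eq π hπ]
          intro a ha x
          have : ⁅a, x⁆ = 1 := commutatorElement_eq_one_iff_mul_comm.mpr (hcent a ha x)
          rw [this]; exact one_mem K
      have hKfinal : Subgroup.lowerCentralSeries (⊤ : Subgroup (G ⧸ N)) (n + 1) ≤ K := by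
        rw [lcs_succ_eq]
        rw [Subgroup.commutator_le]
        intro a ha x _
        exact hA ha x
      -- pull back to G
      intro g hg
      have : π g ∈ K := by
        apply hKfinal
        have : π g ∈ Subgroup.map π (Subgroup.lowerCentralSeries (⊤ : Subgroup G) (n + 1)) :=
          Subgroup.mem_map.2 ⟨g, hg, rfl⟩
        rwa [lcs_map_eq π hπ] at this
      have : g ∈ Subgroup.comap π (Subgroup.map π (Subgroup.closure T')) := by
        rwa [Subgroup.mem_comap, MonoidHom.map_closure]
      rwa [Subgroup.comap_map_eq, QuotientGroup.ker_mk'] at this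

lemma grQuot_fg (G : Type*) [Group G] (hG : Group.FG G) (q : ℕ) (hq : 1 ≤ q) :
    Group.FG (grQuot G q) := by
  obtain ⟨T, hTfin, hTsub, hTsup⟩ := exists_finite_gen G hG (q - 1)
  rw [Nat.sub_add_cancel hq] at hTsup
  rw [Group.fg_iff]
  set L := Subgroup.lowerCentralSeries (⊤ : Subgroup G) (q - 1) with hL
  set Nq := (Subgroup.lowerCentralSeries (⊤ : Subgroup G) q).subgroupOf L with hNq
  set S' : Set (grQuot G q) :=
    (fun x : L => (QuotientGroup.mk x : grQuot G q)) '' (Subtype.val ⁻¹' T) with hS'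
  have hclT : Subgroup.closure T ≤ L := (Subgroup.closure_le _).mpr hTsub
  refine ⟨S', ?_, Set.Finite.image _ (Set.Finite.preimage (Set.injOn_of_injective Subtype.val_injective) hTfin)⟩
  rw [eq_top_iff]
  intro b _
  refine QuotientGroup.induction_on b ?_
  intro x
  have hx : (x : G) ∈ Subgroup.closure T ⊔ Subgroup.lowerCentralSeries (⊤ : Subgroup G) q := by
    rw [hTsup]; exact x.2
  rw [← SetLike.mem_coe, Subgroup.mul_normal] at hx
  obtain ⟨h, hh, n, hn, hhn⟩ := hx
  have hhL : h ∈ L := hclT hh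
  have hnL : n ∈ L := lowerCentralSeries_antitone _ (Nat.pred_le q) hn
  have hxeq : x = (⟨h, hhL⟩ : L) * ⟨n, hnL⟩ := by
    apply Subtype.ext
    exact hhn.symm
  have hmkn : (QuotientGroup.mk (⟨n, hnL⟩ : L) : grQuot G q) = 1 := by
    rw [QuotientGroup.eq_one_iff]
    exact Subgroup.mem_subgroupOf.mpr hn
  have hmem : ∀ (h' : G) (hc : h' ∈ Subgroup.closure T) (hm : h' ∈ L),
      (QuotientGroup.mk (⟨h', hm⟩ : L) : grQuot G q) ∈ Subgroup.closure S' := by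
    intro h' hc
    induction hc using Subgroup.closure_induction with
    | mem z hz =>
        intro hm
        exact Subgroup.subset_closure ⟨⟨z, hm⟩, hz, rfl⟩
    | one =>
        intro hm
        have : (⟨1, hm⟩ : L) = 1 := rfl
        rw [this, QuotientGroup.mk_one]
        exact one_mem _
    | mul a b hca hcb iha ihb =>
        intro hm
        have hma : a ∈ L := hclT hca
        have hmb : b ∈ L := hclT hcb
        have : (⟨a * b, hm⟩ : L) = ⟨a, hma⟩ * ⟨b, hmb⟩ := rfl
        rw [this, QuotientGroup.mk_mul]
        exact mul_mem (iha hma) (ihb hmb)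
    | inv a hca iha =>
        intro hm
        have hma : a ∈ L := hclT hca
        have : (⟨a⁻¹, hm⟩ : L) = (⟨a, hma⟩)⁻¹ := rfl
        rw [this, QuotientGroup.mk_inv]
        exact inv_mem (iha hma)
  rw [hxeq, QuotientGroup.mk_mul, hmkn, mul_one]
  exact hmem h hh hhL

lemma grpRank_le_of_surjective {A B : Type*} [Group A] [Group B] (f : A →* B)
    (hf : Function.Surjective f) (hA : Group.FG A) : grpRank B ≤ grpRank A := by
  haveI : Group.FG A := hA
  haveI : Group.FG (Abelianization A) :=
    Group.fg_of_surjective (f := Abelianization.of (G := A))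
      (QuotientGroup.mk_surjective)
  haveI : AddGroup.FG (Additive (Abelianization A)) := GroupFG.iff_add_fg.mp ‹_›
  haveI : Module.Finite ℤ (Additive (Abelianization A)) :=
    Module.Finite.iff_addGroup_fg.mpr ‹_›
  -- the induced surjection on abelianizations
  have hab : Function.Surjective (Abelianization.map f) := by
    intro b
    have hofB : Function.Surjective (Abelianization.of (G := B)) :=
      QuotientGroup.mk_surjective
    obtain ⟨y, rfl⟩ := hofB b
    obtain ⟨x, rfl⟩ := hf y
    exact ⟨Abelianization.of x, Abelianization.map_of f x⟩
  set ψ : Additive (Abelianization A) →+ Additive (Abelianization B) :=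
    MonoidHom.toAdditive (Abelianization.map f) with hψ
  have hψsurj : Function.Surjective ψ := fun b => by
    obtain ⟨a, ha⟩ := hab b.toMul
    exact ⟨Additive.ofMul a, congrArg Additive.ofMul ha⟩
  set Lq := LinearMap.baseChange ℚ ψ.toIntLinearMap with hLq
  have hLqsurj : Function.Surjective Lq := by
    rw [hLq]
    have hLsurj : Function.Surjective ⇑ψ.toIntLinearMap := hψsurj
    have := LinearMap.lTensor_surjective (g := ψ.toIntLinearMap) ℚ hLsurj
    intro z
    obtain ⟨w, hw⟩ := this z
    exact ⟨w, by rw [← hw]; rfl⟩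
  have h1 : grpRank B = Module.finrank ℚ (LinearMap.range Lq) := by
    rw [grpRank]
    rw [LinearMap.range_eq_top.mpr hLqsurj, finrank_top]
  calc grpRank B = Module.finrank ℚ (LinearMap.range Lq) := h1
    _ ≤ Module.finrank ℚ (ℚ ⊗[ℤ] (Additive (Abelianization A))) :=
        LinearMap.finrank_range_le Lq
    _ = grpRank A := rfl

lemma grMap_mk {G H : Type*} [Group G] [Group H] (f : G →* H) (q : ℕ)
    (x : ↥(Subgroup.lowerCentralSeries (⊤ : Subgroup G) (q - 1))) :
    grMap f q (QuotientGroup.mk x) =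
      (QuotientGroup.mk (⟨f x.1, lowerCentralSeries.map f (q - 1)
        (Subgroup.mem_map.2 ⟨x.1, x.2, rfl⟩)⟩ : ↥(Subgroup.lowerCentralSeries (⊤ : Subgroup H) (q - 1))) :
        grQuot H q) := rfl

lemma grMap_surjective {G H : Type*} [Group G] [Group H] (f : G →* H)
    (hf : Function.Surjective f) (q : ℕ) : Function.Surjective (grMap f q) := by
  intro b
  refine QuotientGroup.induction_on b ?_
  intro y
  have hy : (y : H) ∈ Subgroup.map f (Subgroup.lowerCentralSeries (⊤ : Subgroup G) (q - 1)) := by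
    rw [lcs_map_eq f hf]; exact y.2
  obtain ⟨x, hx, hxy⟩ := hy
  refine ⟨QuotientGroup.mk ⟨x, hx⟩, ?_⟩
  rw [grMap_mk]
  exact congrArg QuotientGroup.mk (Subtype.ext hxy)

end Aux

/-- For a finitely generated group `G`, the natural surjections
`gr_q(G) → gr_q(G/G'')` are isomorphisms for `q ≤ 3`; consequently `θ_q(G) ≤ φ_q(G)`,
with equality for `q ≤ 3`. -/
theorem gr_metabelian_surjective_and_iso_low_degrees
    (G : Type*) [Group G] (hG : Group.FG G) (q : ℕ) (hq : 1 ≤ q) :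
    Function.Surjective (grMap (QuotientGroup.mk' (doubleCommutator G)) q) ∧
    (q ≤ 3 → Function.Bijective (grMap (QuotientGroup.mk' (doubleCommutator G)) q)) ∧
    chenRank G q ≤ lcsRank G q ∧
    (q ≤ 3 → chenRank G q = lcsRank G q) := by
  set f := QuotientGroup.mk' (doubleCommutator G) with hfdef
  have hf : Function.Surjective f := QuotientGroup.mk'_surjective _
  have hsurj : Function.Surjective (grMap f q) := grMap_surjective f hf q
  have hinj : q ≤ 3 → Function.Injective (grMap f q) := by
    intro hq3
    rw [injective_iff_map_eq_one]
    intro a ha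
    refine QuotientGroup.induction_on a (fun x hx => ?_) ha
    rw [grMap_mk, QuotientGroup.eq_one_iff, Subgroup.mem_subgroupOf] at hx
    have hx' : f x.1 ∈ Subgroup.map f (Subgroup.lowerCentralSeries (⊤ : Subgroup G) q) := by
      rwa [lcs_map_eq f hf]
    obtain ⟨y, hy, hyx⟩ := hx'
    have hker : y⁻¹ * x.1 ∈ doubleCommutator G := by
      have : f (y⁻¹ * x.1) = 1 := by rw [map_mul, map_inv, hyx]; group
      rwa [← QuotientGroup.ker_mk' (doubleCommutator G), MonoidHom.mem_ker]
    have hmem3 : y⁻¹ * x.1 ∈ Subgroup.lowerCentralSeries (⊤ : Subgroup G) q :=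
      lowerCentralSeries_antitone _ hq3 (doubleCommutator_le_lcs G hker)
    have hxq : x.1 ∈ Subgroup.lowerCentralSeries (⊤ : Subgroup G) q := by
      have := mul_mem hy hmem3
      rwa [mul_inv_cancel_left] at this
    rw [QuotientGroup.eq_one_iff, Subgroup.mem_subgroupOf]
    exact hxq
  have hfgq : Group.FG (grQuot G q) := grQuot_fg G hG q hq
  have hfgM : Group.FG (Metab G) := by
    haveI := hG
    exact Group.fg_of_surjective hf
  have hfgqM : Group.FG (grQuot (Metab G) q) := grQuot_fg (Metab G) hfgM q hq
  have hle : chenRank G q ≤ lcsRank G q :=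
    grpRank_le_of_surjective (grMap f q) hsurj hfgq
  refine ⟨hsurj, fun hq3 => ⟨hinj hq3, hsurj⟩, hle, fun hq3 => ?_⟩
  refine le_antisymm hle ?_
  let e := MulEquiv.ofBijective (grMap f q) ⟨hinj hq3, hsurj⟩
  exact grpRank_le_of_surjective e.symm.toMonoidHom e.symm.surjective hfgqM

end ChenRanks
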